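/- The sequences α_n, β_n, γ_n converge to 2/5, 2/5, and 1/5 respectively as n → ∞. -/

import Mathlib

open Filter

set_option maxHeartbeats 1000000 in
theorem stmt_14 (p : ℝ) (hp : 0 < p) (hp' : p < 1/2)
(b c d : ℕ → ℝ)
    (hb2 : b 2 = (1 - p) / (5 - 7*p))
    (hc2 : c 2 = (1 - 2*p) / (5 - 7*p))
    (hd : ∀ n, 2 ≤ n → d n = c n*(2-p)*p + (c n)^2*(1-2*p) + (b n)^2*p*(2-3*p)
        + b n*p*(3-4*p) + b n * c n*(2-6*p+6*p^2))
    (hbrec : ∀ n, 2 ≤ n → b (n+1) = p*(b n * c n*(2-3*p) + (b n)^2*(1-p) + (c n)^2*p) / d n)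
    (hcrec : ∀ n, 2 ≤ n → c (n+1) = p*(b n * c n + (c n)^2*(1-p) + (b n)^2*(1-2*p)) / d n)
    (α β γ : ℕ → ℝ)
    (hα2 : α 2 = (3 - 4*p) / (5 - 7*p))
    (hβ2 : β 2 = (1 - p) / (5 - 7*p))
    (hγ2 : γ 2 = (1 - 2*p) / (5 - 7*p))
    (hαrec : ∀ n, 2 ≤ n → α (n+1) = ((b n + c n)*(1-p)*p + (c n)^2*(1-2*p)
        + (b n)^2*p*(2-3*p) + b n * c n*(2 - 6*p*(1-p))) / d n)
    (hβrec : ∀ n, 2 ≤ n → β (n+1) = (b n + c n)*(1-p)*p / d n)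
    (hγrec : ∀ n, 2 ≤ n → γ (n+1) = p*(b n*(1-2*p) + c n * p) / d n) :
    Filter.Tendsto α Filter.atTop (nhds (2/5)) ∧
    Filter.Tendsto β Filter.atTop (nhds (2/5)) ∧
    Filter.Tendsto γ Filter.atTop (nhds (1/5)) := by
  have h5 : (0:ℝ) < 5 - 7*p := by linarith
  have h23 : (0:ℝ) < 2 - 3*p := by linarith
  have h6p : (0:ℝ) < 2 - 6*p + 6*p^2 := by nlinarith [sq_nonneg (2*p-1)]
  -- positivity of b and c
  have hbc : ∀ n, 2 ≤ n → 0 < b n ∧ 0 < c n := by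
    intro n hn
    induction n, hn using Nat.le_induction with
    | base =>
      rw [hb2, hc2]
      exact ⟨div_pos (by linarith) h5, div_pos (by linarith) h5⟩
    | succ n hn ih =>
      obtain ⟨hbn, hcn⟩ := ih
      have hdn : 0 < d n := by
        rw [hd n hn]
        have e1 : 0 < c n*(2-p)*p := mul_pos (mul_pos hcn (by linarith)) hp
        have e2 : 0 < (c n)^2*(1-2*p) := mul_pos (by positivity) (by linarith)
        have e3 : 0 < (b n)^2*p*(2-3*p) := mul_pos (mul_pos (by positivity) hp) h23
        have e4 : 0 < b n*p*(3-4*p) := mul_pos (mul_pos hbn hp) (by linarith)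
        have e5 : 0 < b n * c n*(2-6*p+6*p^2) := mul_pos (mul_pos hbn hcn) h6p
        linarith
      constructor
      · rw [hbrec n hn]
        apply div_pos _ hdn
        have e1 : 0 < b n * c n*(2-3*p) := mul_pos (mul_pos hbn hcn) h23
        have e2 : 0 < (b n)^2*(1-p) := mul_pos (by positivity) (by linarith)
        have e3 : 0 < (c n)^2*p := mul_pos (by positivity) hp
        nlinarith
      · rw [hcrec n hn]
        apply div_pos _ hdn
        have e1 : 0 < b n * c n := mul_pos hbn hcn
        have e2 : 0 < (c n)^2*(1-p) := mul_pos (by positivity) (by linarith)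
        have e3 : 0 < (b n)^2*(1-2*p) := mul_pos (by positivity) (by linarith)
        nlinarith
  have hdp : ∀ n, 2 ≤ n → 0 < d n := by
    intro n hn
    obtain ⟨hbn, hcn⟩ := hbc n hn
    rw [hd n hn]
    have e1 : 0 < c n*(2-p)*p := mul_pos (mul_pos hcn (by linarith)) hp
    have e2 : 0 < (c n)^2*(1-2*p) := mul_pos (by positivity) (by linarith)
    have e3 : 0 < (b n)^2*p*(2-3*p) := mul_pos (mul_pos (by positivity) hp) h23
    have e4 : 0 < b n*p*(3-4*p) := mul_pos (mul_pos hbn hp) (by linarith)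
    have e5 : 0 < b n * c n*(2-6*p+6*p^2) := mul_pos (mul_pos hbn hcn) h6p
    linarith
  -- key identities for the sum and difference
  have hsrec : ∀ n, 2 ≤ n → b (n+1) + c (n+1)
      = p*(b n + c n)*((3-3*p)*(b n + c n)+(1-3*p)*(b n - c n))/(2*d n) := by
    intro n hn
    have hdn := hdp n hn
    rw [hbrec n hn, hcrec n hn, ← add_div,
      div_eq_div_iff hdn.ne' (by linarith : (0:ℝ) < 2*d n).ne']
    ring
  have hdrec : ∀ n, 2 ≤ n → b (n+1) - c (n+1)
      = p*(b n - c n)*((1-p)*(b n + c n)+(3*p-1)*(b n - c n))/(2*d n) := by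
    intro n hn
    have hdn := hdp n hn
    rw [hbrec n hn, hcrec n hn, div_sub_div_same,
      div_eq_div_iff hdn.ne' (by linarith : (0:ℝ) < 2*d n).ne']
    ring
  -- geometric decay of the sum
  have hs45 : ∀ n, 2 ≤ n → b (n+1) + c (n+1) ≤ 4/5*(b n + c n) := by
    intro n hn
    obtain ⟨hbn, hcn⟩ := hbc n hn
    have hdn := hdp n hn
    rw [hsrec n hn, div_le_iff₀ (by linarith : (0:ℝ) < 2*d n)]
    have k1 : 0 ≤ p*(c n)*(6-8*p) := mul_nonneg (mul_nonneg hp.le hcn.le) (by linarith)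
    have k2 : 0 ≤ p*(b n)*(4-2*p) := mul_nonneg (mul_nonneg hp.le hbn.le) (by linarith)
    have k3 : 0 ≤ (c n)^2*(1-2*p) := mul_nonneg (by positivity) (by linarith)
    have k4 : 0 ≤ (b n)^2*p*(2-3*p) := mul_nonneg (mul_nonneg (by positivity) hp.le) h23.le
    have k5 : 0 ≤ b n * c n*(2-6*p+6*p^2) := mul_nonneg (mul_nonneg hbn.le hcn.le) h6p.le
    have A : 5*(p*((3-3*p)*(b n + c n)+(1-3*p)*(b n - c n))) ≤ 8*(d n) := by
      rw [hd n hn]; linarith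
    have hsnn : (0:ℝ) ≤ b n + c n := by linarith
    nlinarith [mul_le_mul_of_nonneg_left A hsnn]
  have hspos : ∀ m : ℕ, 0 < b (m+2) + c (m+2) := by
    intro m
    obtain ⟨h1, h2⟩ := hbc (m+2) (by omega)
    linarith
  have hsgeo : ∀ m : ℕ, b (m+2) + c (m+2) ≤ (b 2 + c 2) * (4/5)^m := by
    intro m
    induction m with
    | zero => simp
    | succ m ih =>
      calc b (m+1+2) + c (m+1+2) ≤ 4/5*(b (m+2) + c (m+2)) := hs45 (m+2) (by omega)
        _ ≤ 4/5*((b 2 + c 2) * (4/5)^m) := by linarith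
        _ = (b 2 + c 2) * (4/5)^(m+1) := by ring
  have limS : Tendsto (fun m => b (m+2) + c (m+2)) atTop (nhds 0) := by
    apply squeeze_zero (fun m => (hspos m).le) hsgeo
    have h := tendsto_pow_atTop_nhds_zero_of_lt_one (by norm_num : (0:ℝ) ≤ 4/5)
      (by norm_num : (4:ℝ)/5 < 1)
    simpa using h.const_mul (b 2 + c 2)
  -- the contraction constant for the normalized difference
  set q : ℝ := max (1-2*p) (p/(2-3*p)) with hqdef
  have hq0 : 0 ≤ q := le_trans (by linarith : (0:ℝ) ≤ 1-2*p) (le_max_left _ _)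
  have hq1 : q < 1 := max_lt (by linarith) ((div_lt_one h23).mpr (by linarith))
  have hqa : 1-2*p ≤ q := le_max_left _ _
  have hqb : p ≤ q*(2-3*p) := by
    have h := le_max_right (1-2*p) (p/(2-3*p))
    calc p = (p/(2-3*p))*(2-3*p) := by rw [div_mul_cancel₀ _ h23.ne']
      _ ≤ q*(2-3*p) := mul_le_mul_of_nonneg_right h h23.le
  have habs : ∀ s t : ℝ, 0 < s → |t| ≤ s →
      |(1-p)*s+(3*p-1)*t| ≤ q*((3-3*p)*s+(1-3*p)*t) := by
    intro s t hs ht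
    rw [abs_le] at ht
    have hA : 0 ≤ (q*(2-3*p)-p)*(s+t) := mul_nonneg (by linarith) (by linarith)
    have hB : 0 ≤ (q-(1-2*p))*(s-t) := mul_nonneg (by linarith) (by linarith)
    have hA' : 0 ≤ (q*(2-3*p)+p)*(s+t) := mul_nonneg (by nlinarith [mul_nonneg hq0 h23.le]) (by linarith)
    have hB' : 0 ≤ (q+(1-2*p))*(s-t) := mul_nonneg (by linarith) (by linarith)
    rw [abs_le]
    constructor <;> nlinarith
  have hXpos : ∀ m : ℕ, |b (m+2) - c (m+2)| ≤ b (m+2) + c (m+2) →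
      0 < (3-3*p)*(b (m+2) + c (m+2))+(1-3*p)*(b (m+2) - c (m+2)) := by
    intro m hm
    rw [abs_le] at hm
    obtain ⟨h1, h2⟩ := hbc (m+2) (by omega)
    nlinarith
  -- decay of the normalized difference
  have hdlt : ∀ m : ℕ, |b (m+2) - c (m+2)| ≤ q^m * (b (m+2) + c (m+2)) := by
    intro m
    induction m with
    | zero =>
      simp only [pow_zero, one_mul]
      have e1 : b 2 - c 2 = p/(5-7*p) := by rw [hb2, hc2]; ring
      have e2 : b 2 + c 2 = (2-3*p)/(5-7*p) := by rw [hb2, hc2]; ring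
      rw [e1, e2, abs_of_pos (div_pos hp h5), div_le_div_iff₀ h5 h5]
      nlinarith
    | succ m ih =>
      obtain ⟨hbn, hcn⟩ := hbc (m+2) (by omega)
      have hdn := hdp (m+2) (by omega)
      have hsn := hspos m
      have hqm1 : q^m ≤ 1 := pow_le_one₀ hq0 hq1.le
      have hδs : |b (m+2) - c (m+2)| ≤ b (m+2) + c (m+2) := by
        refine ih.trans ?_
        nlinarith
      have habs' := habs _ _ hsn hδs
      have h2d : (0:ℝ) < 2*d (m+2) := by linarith
      have key : |b (m+2+1) - c (m+2+1)| ≤ q^(m+1) * (b (m+2+1) + c (m+2+1)) := by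
        rw [hdrec (m+2) (by omega), hsrec (m+2) (by omega)]
        rw [abs_div, abs_mul, abs_mul, abs_of_pos hp, abs_of_pos h2d]
        have num_le : p* |b (m+2) - c (m+2)| * |(1-p)*(b (m+2)+c (m+2))+(3*p-1)*(b (m+2)-c (m+2))|
            ≤ q^(m+1)*(p*(b (m+2)+c (m+2))*((3-3*p)*(b (m+2)+c (m+2))+(1-3*p)*(b (m+2)-c (m+2)))) := by
          have t1 : |b (m+2) - c (m+2)| * |(1-p)*(b (m+2)+c (m+2))+(3*p-1)*(b (m+2)-c (m+2))|
              ≤ (q^m*(b (m+2)+c (m+2)))*(q*((3-3*p)*(b (m+2)+c (m+2))+(1-3*p)*(b (m+2)-c (m+2)))) :=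
            mul_le_mul ih habs' (abs_nonneg _) (mul_nonneg (pow_nonneg hq0 m) hsn.le)
          calc p* |b (m+2) - c (m+2)| * |(1-p)*(b (m+2)+c (m+2))+(3*p-1)*(b (m+2)-c (m+2))|
              = p*(|b (m+2) - c (m+2)| * |(1-p)*(b (m+2)+c (m+2))+(3*p-1)*(b (m+2)-c (m+2))|) := by
                ring
            _ ≤ p*((q^m*(b (m+2)+c (m+2)))*(q*((3-3*p)*(b (m+2)+c (m+2))+(1-3*p)*(b (m+2)-c (m+2))))) :=
                mul_le_mul_of_nonneg_left t1 hp.le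
            _ = q^(m+1)*(p*(b (m+2)+c (m+2))*((3-3*p)*(b (m+2)+c (m+2))+(1-3*p)*(b (m+2)-c (m+2)))) := by
                ring
        calc p* |b (m+2) - c (m+2)| * |(1-p)*(b (m+2)+c (m+2))+(3*p-1)*(b (m+2)-c (m+2))|/(2*d (m+2))
            ≤ q^(m+1)*(p*(b (m+2)+c (m+2))*((3-3*p)*(b (m+2)+c (m+2))+(1-3*p)*(b (m+2)-c (m+2))))/(2*d (m+2)) := by
              gcongr
          _ = q^(m+1)*(p*(b (m+2)+c (m+2))*((3-3*p)*(b (m+2)+c (m+2))+(1-3*p)*(b (m+2)-c (m+2)))/(2*d (m+2))) := by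
              ring
      exact key
  -- limit of the normalized difference
  have limR : Tendsto (fun m => (b (m+2) - c (m+2))/(b (m+2) + c (m+2))) atTop (nhds 0) := by
    refine squeeze_zero_norm (fun m => ?_) (tendsto_pow_atTop_nhds_zero_of_lt_one hq0 hq1)
    rw [Real.norm_eq_abs, abs_div, abs_of_pos (hspos m), div_le_iff₀ (hspos m)]
    exact hdlt m
  have limb0 : Tendsto (fun m => b (m+2)) atTop (nhds 0) := by
    apply squeeze_zero (fun m => (hbc (m+2) (by omega)).1.le)
      (fun m => by linarith [(hbc (m+2) (by omega)).2]) limS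
  have limc0 : Tendsto (fun m => c (m+2)) atTop (nhds 0) := by
    apply squeeze_zero (fun m => (hbc (m+2) (by omega)).2.le)
      (fun m => by linarith [(hbc (m+2) (by omega)).1]) limS
  have limBS : Tendsto (fun m => b (m+2)/(b (m+2) + c (m+2))) atTop (nhds (1/2)) := by
    have h := (tendsto_const_nhds (x := (1:ℝ)) (f := atTop)).add limR
    have h2 := h.div_const 2
    have he : ∀ m : ℕ, (1 + (b (m+2) - c (m+2))/(b (m+2) + c (m+2)))/2
        = b (m+2)/(b (m+2) + c (m+2)) := by
      intro m
      have hs := (hspos m).ne'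
      field_simp
      ring
    have h3 := h2.congr he
    norm_num at h3
    exact h3
  have limCS : Tendsto (fun m => c (m+2)/(b (m+2) + c (m+2))) atTop (nhds (1/2)) := by
    have h := (tendsto_const_nhds (x := (1:ℝ)) (f := atTop)).sub limR
    have h2 := h.div_const 2
    have he : ∀ m : ℕ, (1 - (b (m+2) - c (m+2))/(b (m+2) + c (m+2)))/2
        = c (m+2)/(b (m+2) + c (m+2)) := by
      intro m
      have hs := (hspos m).ne'
      field_simp
      ring
    have h3 := h2.congr he
    norm_num at h3
    exact h3
  -- limit of d/(b+c)
  have hdsform : ∀ m : ℕ, d (m+2)/(b (m+2) + c (m+2))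
      = (2-p)*p*(c (m+2)/(b (m+2)+c (m+2)))
      + (1-2*p)*c (m+2)*(c (m+2)/(b (m+2)+c (m+2)))
      + p*(2-3*p)*b (m+2)*(b (m+2)/(b (m+2)+c (m+2)))
      + p*(3-4*p)*(b (m+2)/(b (m+2)+c (m+2)))
      + (2-6*p+6*p^2)*b (m+2)*(c (m+2)/(b (m+2)+c (m+2))) := by
    intro m
    rw [hd (m+2) (by omega)]
    ring
  have limDS : Tendsto (fun m => d (m+2)/(b (m+2) + c (m+2))) atTop (nhds (p*(5-5*p)/2)) := by
    have L1 : Tendsto (fun m => (2-p)*p*(c (m+2)/(b (m+2)+c (m+2)))) atTop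
        (nhds ((2-p)*p*(1/2))) := tendsto_const_nhds.mul limCS
    have L2 : Tendsto (fun m => (1-2*p)*c (m+2)*(c (m+2)/(b (m+2)+c (m+2)))) atTop
        (nhds ((1-2*p)*0*(1/2))) := (tendsto_const_nhds.mul limc0).mul limCS
    have L3 : Tendsto (fun m => p*(2-3*p)*b (m+2)*(b (m+2)/(b (m+2)+c (m+2)))) atTop
        (nhds (p*(2-3*p)*0*(1/2))) := (tendsto_const_nhds.mul limb0).mul limBS
    have L4 : Tendsto (fun m => p*(3-4*p)*(b (m+2)/(b (m+2)+c (m+2)))) atTop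
        (nhds (p*(3-4*p)*(1/2))) := tendsto_const_nhds.mul limBS
    have L5 : Tendsto (fun m => (2-6*p+6*p^2)*b (m+2)*(c (m+2)/(b (m+2)+c (m+2)))) atTop
        (nhds ((2-6*p+6*p^2)*0*(1/2))) := (tendsto_const_nhds.mul limb0).mul limCS
    have L := (((L1.add L2).add L3).add L4).add L5
    have hv : (2-p)*p*(1/2) + (1-2*p)*0*(1/2) + p*(2-3*p)*0*(1/2) + p*(3-4*p)*(1/2)
        + (2-6*p+6*p^2)*0*(1/2) = p*(5-5*p)/2 := by ring
    rw [hv] at L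
    exact L.congr (fun m => (hdsform m).symm)
  have hDSpos : 0 < p*(5-5*p)/2 := by
    have := mul_pos hp (show (0:ℝ) < 5-5*p by linarith)
    linarith
  have hDSne : p*(5-5*p)/2 ≠ 0 := hDSpos.ne'
  -- beta
  have limβ : Tendsto (fun m => β (m+3)) atTop (nhds (2/5)) := by
    have e : ∀ m : ℕ, β (m+3) = (1-p)*p/(d (m+2)/(b (m+2)+c (m+2))) := by
      intro m
      have hs := (hspos m).ne'
      have hdne := (hdp (m+2) (by omega)).ne'
      have h := hβrec (m+2) (by omega)
      rw [show m+3 = m+2+1 from rfl, h]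
      field_simp
    have L := (tendsto_const_nhds (x := (1-p)*p) (f := atTop)).div limDS hDSne
    have hv : (1-p)*p/(p*(5-5*p)/2) = 2/5 := by
      rw [div_eq_iff hDSne]; ring
    rw [hv] at L
    exact L.congr (fun m => (e m).symm)
  -- gamma
  have limγ : Tendsto (fun m => γ (m+3)) atTop (nhds (1/5)) := by
    have e : ∀ m : ℕ, γ (m+3) = p*((1-2*p)*(b (m+2)/(b (m+2)+c (m+2)))
        + p*(c (m+2)/(b (m+2)+c (m+2))))/(d (m+2)/(b (m+2)+c (m+2))) := by
      intro m
      have hs := (hspos m).ne'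
      have hdne := (hdp (m+2) (by omega)).ne'
      have h := hγrec (m+2) (by omega)
      rw [show m+3 = m+2+1 from rfl, h]
      field_simp
      try ring
      try tauto
    have Lnum : Tendsto (fun m => p*((1-2*p)*(b (m+2)/(b (m+2)+c (m+2)))
        + p*(c (m+2)/(b (m+2)+c (m+2))))) atTop (nhds (p*((1-2*p)*(1/2) + p*(1/2)))) :=
      tendsto_const_nhds.mul ((tendsto_const_nhds.mul limBS).add (tendsto_const_nhds.mul limCS))
    have L := Lnum.div limDS hDSne
    have hv : p*((1-2*p)*(1/2) + p*(1/2))/(p*(5-5*p)/2) = 1/5 := by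
      rw [div_eq_div_iff (by positivity) (by norm_num : (5:ℝ) ≠ 0)]; ring
    rw [hv] at L
    exact L.congr (fun m => (e m).symm)
  -- alpha
  have limα : Tendsto (fun m => α (m+3)) atTop (nhds (2/5)) := by
    have e : ∀ m : ℕ, α (m+3) = ((1-p)*p
        + (1-2*p)*c (m+2)*(c (m+2)/(b (m+2)+c (m+2)))
        + p*(2-3*p)*b (m+2)*(b (m+2)/(b (m+2)+c (m+2)))
        + (2-6*p*(1-p))*b (m+2)*(c (m+2)/(b (m+2)+c (m+2))))/(d (m+2)/(b (m+2)+c (m+2))) := by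
      intro m
      have hs := (hspos m).ne'
      have hdne := (hdp (m+2) (by omega)).ne'
      have h := hαrec (m+2) (by omega)
      rw [show m+3 = m+2+1 from rfl, h]
      field_simp
    have N1 : Tendsto (fun _ : ℕ => (1-p)*p) atTop (nhds ((1-p)*p)) := tendsto_const_nhds
    have N2 : Tendsto (fun m => (1-2*p)*c (m+2)*(c (m+2)/(b (m+2)+c (m+2)))) atTop
        (nhds ((1-2*p)*0*(1/2))) := (tendsto_const_nhds.mul limc0).mul limCS
    have N3 : Tendsto (fun m => p*(2-3*p)*b (m+2)*(b (m+2)/(b (m+2)+c (m+2)))) atTop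
        (nhds (p*(2-3*p)*0*(1/2))) := (tendsto_const_nhds.mul limb0).mul limBS
    have N4 : Tendsto (fun m => (2-6*p*(1-p))*b (m+2)*(c (m+2)/(b (m+2)+c (m+2)))) atTop
        (nhds ((2-6*p*(1-p))*0*(1/2))) := (tendsto_const_nhds.mul limb0).mul limCS
    have Lnum := ((N1.add N2).add N3).add N4
    have L := Lnum.div limDS hDSne
    have hv : ((1-p)*p + (1-2*p)*0*(1/2) + p*(2-3*p)*0*(1/2) + (2-6*p*(1-p))*0*(1/2))
        /(p*(5-5*p)/2) = 2/5 := by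
      rw [div_eq_div_iff (by positivity) (by norm_num : (5:ℝ) ≠ 0)]; ring
    rw [hv] at L
    exact L.congr (fun m => (e m).symm)
  refine ⟨?_, ?_, ?_⟩
  · exact (tendsto_add_atTop_iff_nat 3).mp limα
  · exact (tendsto_add_atTop_iff_nat 3).mp limβ
  · exact (tendsto_add_atTop_iff_nat 3).mp limγ
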